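/- Let m be a positive integer and F a finite set of faces (unordered triples of distinct indices in Fin m) such that every edge index lies in at least one face and the graph on faces with adjacency given by sharing an edge is connected. Let u, ũ : Fin m → ℝ be admissible metrics (positive, and for each face the square roots satisfy the strict triangle inequalities) with Σ_e u_e = Σ_e ũ_e = m. If the cotangent edge weights agree, w_e(u) = w_e(ũ) for all e ∈ Fin m, then u = ũ. -/

import Mathlib

/-- `u` is an admissible metric: `u_e > 0` for every edge, and on each face the
lengths `d_e = √(2 u_e)` satisfy the strict triangle inequalities. -/
def AdmissibleMetric (m : ℕ) (F : Finset (Finset (Fin m))) (u : Fin m → ℝ) : Prop :=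
  (∀ e, 0 < u e) ∧
  ∀ f ∈ F, ∀ i ∈ f, ∀ j ∈ f, ∀ k ∈ f, i ≠ j → i ≠ k → j ≠ k →
    Real.sqrt (2 * u i) < Real.sqrt (2 * u j) + Real.sqrt (2 * u k)

/-- The angle opposite edge `e` in face `f`, determined by the law of cosines:
`cos θ_i = (d_j² + d_k² − d_i²)/(2 d_j d_k)` where `{j,k} = f \ {e}` and
`d_a = √(2 u_a)` (so `d_a² = 2 u_a`). -/
noncomputable def faceAngle (m : ℕ) (u : Fin m → ℝ) (f : Finset (Fin m)) (e : Fin m) : ℝ :=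
  Real.arccos ((∑ a ∈ f.erase e, 2 * u a - 2 * u e) /
    (2 * ∏ a ∈ f.erase e, Real.sqrt (2 * u a)))

/-- The cotangent edge weight `w_e(u) = (1/2) Σ_{f ∈ F, e ∈ f} cot θ_e^f`. -/
noncomputable def cotWeight (m : ℕ) (F : Finset (Finset (Fin m)))
    (u : Fin m → ℝ) (e : Fin m) : ℝ :=
  (1 / 2) * ∑ f ∈ F.filter (fun f => e ∈ f), Real.cot (faceAngle m u f e)

/-- The adjacency graph on the faces: two faces are adjacent when they are
distinct and share an edge index. -/
def faceGraph (m : ℕ) (F : Finset (Finset (Fin m))) :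
    SimpleGraph {f : Finset (Fin m) // f ∈ F} where
  Adj a b := a ≠ b ∧ ((a : Finset (Fin m)) ∩ (b : Finset (Fin m))).Nonempty
  symm := by
    constructor
    rintro a b ⟨hab, hint⟩
    exact ⟨hab.symm, by rwa [Finset.inter_comm]⟩
  loopless := by
    constructor
    rintro a ⟨hne, -⟩
    exact hne rfl

/-! ### Auxiliary lemmas for the rigidity proof -/

/-- Heron-type polynomial: `Qrig a b c > 0` iff `√a,√b,√c` form a nondegenerate triangle. -/
def Qrig (a b c : ℝ) : ℝ := 2*(a*b+b*c+c*a) - a^2 - b^2 - c^2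

lemma tri_Q {a b c : ℝ} (ha : 0 < a) (hb : 0 < b) (hc : 0 < c)
    (h1 : Real.sqrt a < Real.sqrt b + Real.sqrt c)
    (h2 : Real.sqrt b < Real.sqrt a + Real.sqrt c)
    (h3 : Real.sqrt c < Real.sqrt a + Real.sqrt b) :
    0 < Qrig a b c := by
  obtain ⟨x, hx, rfl⟩ : ∃ x, 0 < x ∧ a = x^2 :=
    ⟨Real.sqrt a, Real.sqrt_pos.mpr ha, (Real.sq_sqrt ha.le).symm⟩
  obtain ⟨y, hy, rfl⟩ : ∃ y, 0 < y ∧ b = y^2 :=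
    ⟨Real.sqrt b, Real.sqrt_pos.mpr hb, (Real.sq_sqrt hb.le).symm⟩
  obtain ⟨z, hz, rfl⟩ : ∃ z, 0 < z ∧ c = z^2 :=
    ⟨Real.sqrt c, Real.sqrt_pos.mpr hc, (Real.sq_sqrt hc.le).symm⟩
  rw [Real.sqrt_sq hx.le, Real.sqrt_sq hy.le, Real.sqrt_sq hz.le] at h1 h2 h3
  have hprod : 0 < (x+y+z) * ((y+z-x) * ((x+z-y) * (x+y-z))) := by
    apply mul_pos (by linarith)
    exact mul_pos (by linarith) (mul_pos (by linarith) (by linarith))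
  unfold Qrig
  nlinarith [hprod]

lemma cot_formula {a b c : ℝ} (hb : 0 < b) (hc : 0 < c) (hQ : 0 < Qrig a b c) :
    Real.cot (Real.arccos ((b + c - a) / (2 * (Real.sqrt b * Real.sqrt c)))) =
      (b + c - a) / Real.sqrt (Qrig a b c) := by
  have hsb := Real.sqrt_pos.mpr hb
  have hsc := Real.sqrt_pos.mpr hc
  have hD : (0:ℝ) < 2 * (Real.sqrt b * Real.sqrt c) := by positivity
  have hb2 : Real.sqrt b ^ 2 = b := Real.sq_sqrt hb.le
  have hc2 : Real.sqrt c ^ 2 = c := Real.sq_sqrt hc.le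
  have hD2 : (2 * (Real.sqrt b * Real.sqrt c))^2 = 4*(b*c) := by
    rw [mul_pow, mul_pow, hb2, hc2]; norm_num
  set x := (b + c - a) / (2 * (Real.sqrt b * Real.sqrt c)) with hx
  have h1x : 1 - x^2 = Qrig a b c / (2 * (Real.sqrt b * Real.sqrt c))^2 := by
    rw [hx, div_pow, hD2]
    rw [show Qrig a b c = 4*(b*c) - (b+c-a)^2 from by unfold Qrig; ring]
    field_simp
  have hQ4 : 0 < Qrig a b c / (2 * (Real.sqrt b * Real.sqrt c))^2 := by positivity
  have hxlt : x^2 < 1 := by linarith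
  have hx1 : -1 ≤ x := by nlinarith
  have hx2 : x ≤ 1 := by nlinarith
  have hsQ : 0 < Real.sqrt (Qrig a b c) := Real.sqrt_pos.mpr hQ
  rw [Real.cot_eq_cos_div_sin, Real.cos_arccos hx1 hx2, Real.sin_arccos, h1x,
    Real.sqrt_div hQ.le, Real.sqrt_sq hD.le, hx]
  field_simp

lemma lt_of_sq_lt' {t r : ℝ} (h : 0 < t^2 - r^2) (ht : 0 < t) (hr : 0 ≤ r) : r < t := by
  nlinarith

lemma le_of_sq_le' {x y : ℝ} (h : x^2 ≤ y^2) (hy : 0 ≤ y) (hx : 0 ≤ x) : x ≤ y := by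
  nlinarith

lemma mink2 {t r t' r' : ℝ} : (t^2-r^2)*(t'^2-r'^2) ≤ (t*t'-r*r')^2 := by
  nlinarith [sq_nonneg (t*r'-t'*r)]

lemma cs6 {a b c a' b' c' : ℝ} :
    (2*(a*a'+b*b'+c*c'))^2 ≤ (2*(a^2+b^2+c^2))*(2*(a'^2+b'^2+c'^2)) := by
  nlinarith [sq_nonneg (a*b'-b*a'), sq_nonneg (a*c'-c*a'), sq_nonneg (b*c'-c*b')]

/-- Reverse Cauchy–Schwarz for the Lorentzian form underlying Heron's formula. -/
lemma B_ge {a b c a' b' c' : ℝ}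
    (ha : 0 < a) (hb : 0 < b) (hc : 0 < c) (ha' : 0 < a') (hb' : 0 < b') (hc' : 0 < c')
    (hQ : 0 < Qrig a b c) (hQ' : 0 < Qrig a' b' c') :
    Real.sqrt (Qrig a b c) * Real.sqrt (Qrig a' b' c')
      ≤ (a+b+c)*(a'+b'+c') - 2*(a*a'+b*b'+c*c') := by
  set r := Real.sqrt (2*(a^2+b^2+c^2)) with hr
  set r' := Real.sqrt (2*(a'^2+b'^2+c'^2)) with hr'
  have hrnn : 0 ≤ r := Real.sqrt_nonneg _
  have hrnn' : 0 ≤ r' := Real.sqrt_nonneg _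
  have hr2 : r^2 = 2*(a^2+b^2+c^2) := Real.sq_sqrt (by positivity)
  have hr'2 : r'^2 = 2*(a'^2+b'^2+c'^2) := Real.sq_sqrt (by positivity)
  have hpr : 2*(a*a'+b*b'+c*c') ≤ r * r' := by
    refine le_of_sq_le' ?_ (mul_nonneg hrnn hrnn') (by positivity)
    rw [mul_pow r r', hr2, hr'2]; exact cs6
  have e1 : Qrig a b c = (a+b+c)^2 - r^2 := by rw [hr2]; unfold Qrig; ring
  have e2 : Qrig a' b' c' = (a'+b'+c')^2 - r'^2 := by rw [hr'2]; unfold Qrig; ring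
  have ht : r < a+b+c := lt_of_sq_lt' (by rw [← e1]; exact hQ) (by positivity) hrnn
  have ht' : r' < a'+b'+c' := lt_of_sq_lt' (by rw [← e2]; exact hQ') (by positivity) hrnn'
  have hpos2 : 0 ≤ (a+b+c)*(a'+b'+c') - r*r' := by nlinarith
  have hsq : Qrig a b c * Qrig a' b' c' ≤ ((a+b+c)*(a'+b'+c') - r*r')^2 := by
    rw [e1, e2]; exact mink2
  calc Real.sqrt (Qrig a b c) * Real.sqrt (Qrig a' b' c')
      = Real.sqrt (Qrig a b c * Qrig a' b' c') := (Real.sqrt_mul hQ.le _).symm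
    _ ≤ Real.sqrt (((a+b+c)*(a'+b'+c') - r*r')^2) := Real.sqrt_le_sqrt hsq
    _ = (a+b+c)*(a'+b'+c') - r*r' := Real.sqrt_sq hpos2
    _ ≤ (a+b+c)*(a'+b'+c') - 2*(a*a'+b*b'+c*c') := by linarith

/-- Equality in the reverse Cauchy–Schwarz forces proportionality. -/
lemma prop_of_eq {a b c a' b' c' : ℝ}
    (ha : 0 < a) (hb : 0 < b) (hc : 0 < c) (ha' : 0 < a') (hb' : 0 < b') (hc' : 0 < c')
    (hQ : 0 < Qrig a b c) (hQ' : 0 < Qrig a' b' c')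
    (heq : (a+b+c)*(a'+b'+c') - 2*(a*a'+b*b'+c*c')
        = Real.sqrt (Qrig a b c) * Real.sqrt (Qrig a' b' c')) :
    ∃ l, 0 < l ∧ a' = l*a ∧ b' = l*b ∧ c' = l*c := by
  set r := Real.sqrt (2*(a^2+b^2+c^2)) with hr
  set r' := Real.sqrt (2*(a'^2+b'^2+c'^2)) with hr'
  have hrnn : 0 ≤ r := Real.sqrt_nonneg _
  have hrnn' : 0 ≤ r' := Real.sqrt_nonneg _
  have hr2 : r^2 = 2*(a^2+b^2+c^2) := Real.sq_sqrt (by positivity)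
  have hr'2 : r'^2 = 2*(a'^2+b'^2+c'^2) := Real.sq_sqrt (by positivity)
  have hpr : 2*(a*a'+b*b'+c*c') ≤ r * r' := by
    refine le_of_sq_le' ?_ (mul_nonneg hrnn hrnn') (by positivity)
    rw [mul_pow r r', hr2, hr'2]; exact cs6
  have e1 : Qrig a b c = (a+b+c)^2 - r^2 := by rw [hr2]; unfold Qrig; ring
  have e2 : Qrig a' b' c' = (a'+b'+c')^2 - r'^2 := by rw [hr'2]; unfold Qrig; ring
  have ht : r < a+b+c := lt_of_sq_lt' (by rw [← e1]; exact hQ) (by positivity) hrnn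
  have ht' : r' < a'+b'+c' := lt_of_sq_lt' (by rw [← e2]; exact hQ') (by positivity) hrnn'
  have hpos2 : 0 ≤ (a+b+c)*(a'+b'+c') - r*r' := by nlinarith
  have hsq : Qrig a b c * Qrig a' b' c' ≤ ((a+b+c)*(a'+b'+c') - r*r')^2 := by
    rw [e1, e2]; exact mink2
  have hmink : Real.sqrt (Qrig a b c) * Real.sqrt (Qrig a' b' c')
      ≤ (a+b+c)*(a'+b'+c') - r*r' := by
    calc Real.sqrt (Qrig a b c) * Real.sqrt (Qrig a' b' c')
        = Real.sqrt (Qrig a b c * Qrig a' b' c') := (Real.sqrt_mul hQ.le _).symm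
      _ ≤ Real.sqrt (((a+b+c)*(a'+b'+c') - r*r')^2) := Real.sqrt_le_sqrt hsq
      _ = (a+b+c)*(a'+b'+c') - r*r' := Real.sqrt_sq hpos2
  have hpeq : 2*(a*a'+b*b'+c*c') = r * r' := by linarith
  have hp2 : (2*(a*a'+b*b'+c*c'))^2 = (2*(a^2+b^2+c^2))*(2*(a'^2+b'^2+c'^2)) := by
    rw [hpeq, mul_pow r r', hr2, hr'2]
  have hcross : (a*b'-b*a')^2 + (a*c'-c*a')^2 + (b*c'-c*b')^2 = 0 := by
    linear_combination (-1/4 : ℝ) * hp2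
  have c1 : a*b' = b*a' := by
    have h1 : (a*b'-b*a')^2 = 0 := by
      linarith [hcross, sq_nonneg (a*c'-c*a'), sq_nonneg (b*c'-c*b'), sq_nonneg (a*b'-b*a')]
    have := pow_eq_zero_iff (n := 2) (by norm_num) |>.mp h1
    linarith [this]
  have c2 : a*c' = c*a' := by
    have h1 : (a*c'-c*a')^2 = 0 := by
      linarith [hcross, sq_nonneg (a*b'-b*a'), sq_nonneg (b*c'-c*b'), sq_nonneg (a*c'-c*a')]
    have := pow_eq_zero_iff (n := 2) (by norm_num) |>.mp h1
    linarith [this]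
  refine ⟨a'/a, by positivity, by field_simp, ?_, ?_⟩
  · rw [div_mul_eq_mul_div, eq_div_iff ha.ne']
    linear_combination c1
  · rw [div_mul_eq_mul_div, eq_div_iff ha.ne']
    linear_combination c2

lemma faceE {a b c a' b' c' S S' : ℝ} (hS : S ≠ 0) (hS' : S' ≠ 0) :
    ((b + c - a)/S - (b' + c' - a')/S') * ((a - a')/2) +
      ((a + c - b)/S - (a' + c' - b')/S') * ((b - b')/2) +
      ((a + b - c)/S - (a' + b' - c')/S') * ((c - c')/2)
    = (Qrig a b c - ((a+b+c)*(a'+b'+c') - 2*(a*a'+b*b'+c*c')))/(2*S)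
      + (Qrig a' b' c' - ((a+b+c)*(a'+b'+c') - 2*(a*a'+b*b'+c*c')))/(2*S') := by
  unfold Qrig
  field_simp
  ring

lemma faceE2 {x y B : ℝ} (hx : x ≠ 0) (hy : y ≠ 0) :
    (x^2 - B)/(2*x) + (y^2 - B)/(2*y) = (x + y) * (x*y - B) / (2*(x*y)) := by
  field_simp
  ring

lemma face_T (ui uj uk vi vj vk : ℝ)
    (hui : 0 < ui) (huj : 0 < uj) (huk : 0 < uk)
    (hvi : 0 < vi) (hvj : 0 < vj) (hvk : 0 < vk)
    (tu1 : Real.sqrt (2*ui) < Real.sqrt (2*uj) + Real.sqrt (2*uk))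
    (tu2 : Real.sqrt (2*uj) < Real.sqrt (2*ui) + Real.sqrt (2*uk))
    (tu3 : Real.sqrt (2*uk) < Real.sqrt (2*ui) + Real.sqrt (2*uj))
    (tv1 : Real.sqrt (2*vi) < Real.sqrt (2*vj) + Real.sqrt (2*vk))
    (tv2 : Real.sqrt (2*vj) < Real.sqrt (2*vi) + Real.sqrt (2*vk))
    (tv3 : Real.sqrt (2*vk) < Real.sqrt (2*vi) + Real.sqrt (2*vj)) :
    (Real.cot (Real.arccos ((2*uj + 2*uk - 2*ui) / (2 * (Real.sqrt (2*uj) * Real.sqrt (2*uk))))) -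
     Real.cot (Real.arccos ((2*vj + 2*vk - 2*vi) / (2 * (Real.sqrt (2*vj) * Real.sqrt (2*vk)))))) * (ui - vi) +
    (Real.cot (Real.arccos ((2*ui + 2*uk - 2*uj) / (2 * (Real.sqrt (2*ui) * Real.sqrt (2*uk))))) -
     Real.cot (Real.arccos ((2*vi + 2*vk - 2*vj) / (2 * (Real.sqrt (2*vi) * Real.sqrt (2*vk)))))) * (uj - vj) +
    (Real.cot (Real.arccos ((2*ui + 2*uj - 2*uk) / (2 * (Real.sqrt (2*ui) * Real.sqrt (2*uj))))) -
     Real.cot (Real.arccos ((2*vi + 2*vj - 2*vk) / (2 * (Real.sqrt (2*vi) * Real.sqrt (2*vj)))))) * (uk - vk) ≤ 0 ∧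
    ((Real.cot (Real.arccos ((2*uj + 2*uk - 2*ui) / (2 * (Real.sqrt (2*uj) * Real.sqrt (2*uk))))) -
     Real.cot (Real.arccos ((2*vj + 2*vk - 2*vi) / (2 * (Real.sqrt (2*vj) * Real.sqrt (2*vk)))))) * (ui - vi) +
    (Real.cot (Real.arccos ((2*ui + 2*uk - 2*uj) / (2 * (Real.sqrt (2*ui) * Real.sqrt (2*uk))))) -
     Real.cot (Real.arccos ((2*vi + 2*vk - 2*vj) / (2 * (Real.sqrt (2*vi) * Real.sqrt (2*vk)))))) * (uj - vj) +
    (Real.cot (Real.arccos ((2*ui + 2*uj - 2*uk) / (2 * (Real.sqrt (2*ui) * Real.sqrt (2*uj))))) -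
     Real.cot (Real.arccos ((2*vi + 2*vj - 2*vk) / (2 * (Real.sqrt (2*vi) * Real.sqrt (2*vj)))))) * (uk - vk) = 0 →
      ∃ l, 0 < l ∧ vi = l * ui ∧ vj = l * uj ∧ vk = l * uk) := by
  set a := 2*ui with hadef
  set b := 2*uj with hbdef
  set c := 2*uk with hcdef
  set a' := 2*vi with ha'def
  set b' := 2*vj with hb'def
  set c' := 2*vk with hc'def
  have ha : 0 < a := by rw [hadef]; linarith
  have hb : 0 < b := by rw [hbdef]; linarith
  have hc : 0 < c := by rw [hcdef]; linarith
  have ha' : 0 < a' := by rw [ha'def]; linarith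
  have hb' : 0 < b' := by rw [hb'def]; linarith
  have hc' : 0 < c' := by rw [hc'def]; linarith
  have hQu : 0 < Qrig a b c := tri_Q ha hb hc tu1 tu2 tu3
  have hQu2 : 0 < Qrig b a c := by unfold Qrig at hQu ⊢; linarith
  have hQu3 : 0 < Qrig c a b := by unfold Qrig at hQu ⊢; linarith
  have hQv : 0 < Qrig a' b' c' := tri_Q ha' hb' hc' tv1 tv2 tv3
  have hQv2 : 0 < Qrig b' a' c' := by unfold Qrig at hQv ⊢; linarith
  have hQv3 : 0 < Qrig c' a' b' := by unfold Qrig at hQv ⊢; linarith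
  have cu1 := cot_formula hb hc hQu
  have cu2 := cot_formula ha hc hQu2
  have cu3 := cot_formula ha hb hQu3
  have cv1 := cot_formula hb' hc' hQv
  have cv2 := cot_formula ha' hc' hQv2
  have cv3 := cot_formula ha' hb' hQv3
  rw [show Qrig b a c = Qrig a b c from by unfold Qrig; ring] at cu2
  rw [show Qrig c a b = Qrig a b c from by unfold Qrig; ring] at cu3
  rw [show Qrig b' a' c' = Qrig a' b' c' from by unfold Qrig; ring] at cv2
  rw [show Qrig c' a' b' = Qrig a' b' c' from by unfold Qrig; ring] at cv3
  rw [cu1, cu2, cu3, cv1, cv2, cv3]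
  rw [show ui - vi = (a - a')/2 from by rw [hadef, ha'def]; ring,
      show uj - vj = (b - b')/2 from by rw [hbdef, hb'def]; ring,
      show uk - vk = (c - c')/2 from by rw [hcdef, hc'def]; ring]
  set S := Real.sqrt (Qrig a b c) with hS
  set S' := Real.sqrt (Qrig a' b' c') with hS'
  have hSpos : 0 < S := Real.sqrt_pos.mpr hQu
  have hS'pos : 0 < S' := Real.sqrt_pos.mpr hQv
  have hSsq : S^2 = Qrig a b c := Real.sq_sqrt hQu.le
  have hS'sq : S'^2 = Qrig a' b' c' := Real.sq_sqrt hQv.le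
  have hB : S * S' ≤ (a+b+c)*(a'+b'+c') - 2*(a*a'+b*b'+c*c') :=
    B_ge ha hb hc ha' hb' hc' hQu hQv
  rw [faceE hSpos.ne' hS'pos.ne', ← hSsq, ← hS'sq, faceE2 hSpos.ne' hS'pos.ne']
  clear cu1 cu2 cu3 cv1 cv2 cv3 tu1 tu2 tu3 tv1 tv2 tv3
  have hnum : (S + S') * (S * S' - ((a+b+c)*(a'+b'+c') - 2*(a*a'+b*b'+c*c'))) ≤ 0 :=
    mul_nonpos_of_nonneg_of_nonpos (by positivity) (by linarith)
  constructor
  · apply div_nonpos_of_nonpos_of_nonneg hnum (by positivity)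
  · intro h0
    have hden : (2*(S*S')) ≠ 0 := by positivity
    have hnum0 : (S + S') * (S * S' - ((a+b+c)*(a'+b'+c') - 2*(a*a'+b*b'+c*c'))) = 0 := by
      rcases div_eq_zero_iff.mp h0 with h | h
      · exact h
      · exact absurd h hden
    have hBeq : (a+b+c)*(a'+b'+c') - 2*(a*a'+b*b'+c*c') = S * S' := by
      rcases mul_eq_zero.mp hnum0 with h | h
      · exact absurd h (by positivity)
      · linarith only [h]
    obtain ⟨l, hl, e1, e2, e3⟩ := prop_of_eq ha hb hc ha' hb' hc' hQu hQv hBeq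
    refine ⟨l, hl, ?_, ?_, ?_⟩
    · linear_combination (-1/2)*ha'def + (1/2)*e1 + (l/2)*hadef
    · linear_combination (-1/2)*hb'def + (1/2)*e2 + (l/2)*hbdef
    · linear_combination (-1/2)*hc'def + (1/2)*e3 + (l/2)*hcdef

/-- On a connected triangulated surface, two normalized admissible
metrics with the same cotangent edge weights are equal. -/
theorem metric_rigidity_normalized (m : ℕ) (hm : 0 < m)
    (F : Finset (Finset (Fin m))) (hF : ∀ f ∈ F, f.card = 3)
    (hcover : ∀ e : Fin m, ∃ f ∈ F, e ∈ f)
    (hconn : (faceGraph m F).Connected)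
    (u v : Fin m → ℝ)
    (hu : AdmissibleMetric m F u) (hv : AdmissibleMetric m F v)
    (hsumu : ∑ e, u e = (m : ℝ)) (hsumv : ∑ e, v e = (m : ℝ))
    (hw : ∀ e : Fin m, cotWeight m F u e = cotWeight m F v e) :
    u = v := by
  classical
  obtain ⟨hupos, hutri⟩ := hu
  obtain ⟨hvpos, hvtri⟩ := hv
  -- per-face inequality and equality case
  have key : ∀ f ∈ F,
      (∑ e ∈ f, (Real.cot (faceAngle m u f e) - Real.cot (faceAngle m v f e)) * (u e - v e)) ≤ 0 ∧
      ((∑ e ∈ f, (Real.cot (faceAngle m u f e) - Real.cot (faceAngle m v f e)) * (u e - v e)) = 0 →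
        ∃ l, 0 < l ∧ ∀ e ∈ f, v e = l * u e) := by
    intro f hf
    obtain ⟨i, j, k, hij, hik, hjk, rfl⟩ := Finset.card_eq_three.mp (hF f hf)
    have hi : i ∈ ({i, j, k} : Finset (Fin m)) := by simp
    have hj : j ∈ ({i, j, k} : Finset (Fin m)) := by simp
    have hk : k ∈ ({i, j, k} : Finset (Fin m)) := by simp
    have tu1 := hutri _ hf i hi j hj k hk hij hik hjk
    have tu2 := hutri _ hf j hj i hi k hk hij.symm hjk hik
    have tu3 := hutri _ hf k hk i hi j hj hik.symm hjk.symm hij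
    have tv1 := hvtri _ hf i hi j hj k hk hij hik hjk
    have tv2 := hvtri _ hf j hj i hi k hk hij.symm hjk hik
    have tv3 := hvtri _ hf k hk i hi j hj hik.symm hjk.symm hij
    have her_i : ({i, j, k} : Finset (Fin m)).erase i = {j, k} :=
      Finset.erase_insert (by simp [hij, hik])
    have her_j : ({i, j, k} : Finset (Fin m)).erase j = {i, k} := by
      rw [Finset.insert_comm]
      exact Finset.erase_insert (by simp [hij.symm, hjk])
    have her_k : ({i, j, k} : Finset (Fin m)).erase k = {i, j} := by
      rw [Finset.pair_comm j k, Finset.insert_comm]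
      exact Finset.erase_insert (by simp [hik.symm, hjk.symm])
    have hsum3 : ∀ g : Fin m → ℝ, ∑ e ∈ ({i, j, k} : Finset (Fin m)), g e = g i + g j + g k := by
      intro g
      rw [Finset.sum_insert (by simp [hij, hik]), Finset.sum_pair hjk]
      ring
    rw [hsum3]
    simp only [faceAngle, her_i, her_j, her_k, Finset.sum_pair hjk, Finset.sum_pair hik,
      Finset.sum_pair hij, Finset.prod_pair hjk, Finset.prod_pair hik, Finset.prod_pair hij]
    have hT := face_T (u i) (u j) (u k) (v i) (v j) (v k) (hupos i) (hupos j) (hupos k)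
      (hvpos i) (hvpos j) (hvpos k) tu1 tu2 tu3 tv1 tv2 tv3
    refine ⟨hT.1, fun h0 => ?_⟩
    obtain ⟨l, hl, e1, e2, e3⟩ := hT.2 h0
    refine ⟨l, hl, fun e he => ?_⟩
    rcases Finset.mem_insert.mp he with rfl | he'
    · exact e1
    · rcases Finset.mem_insert.mp he' with rfl | he''
      · exact e2
      · rw [Finset.mem_singleton.mp he'']; exact e3
  -- the total sum vanishes since the weights agree
  have hswap : ∑ f ∈ F, ∑ e ∈ f, (Real.cot (faceAngle m u f e) - Real.cot (faceAngle m v f e)) * (u e - v e)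
      = ∑ e : Fin m, ∑ f ∈ F.filter (fun f => e ∈ f),
          (Real.cot (faceAngle m u f e) - Real.cot (faceAngle m v f e)) * (u e - v e) := by
    simp_rw [Finset.sum_filter]
    rw [Finset.sum_comm]
    refine Finset.sum_congr rfl fun f hf => ?_
    rw [← Finset.sum_filter]
    congr 1
    ext e
    simp
  have hinner : ∀ e : Fin m, ∑ f ∈ F.filter (fun f => e ∈ f),
      (Real.cot (faceAngle m u f e) - Real.cot (faceAngle m v f e)) * (u e - v e) = 0 := by
    intro e
    rw [← Finset.sum_mul, Finset.sum_sub_distrib]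
    have h := hw e
    unfold cotWeight at h
    have h2 : ∑ f ∈ F.filter (fun f => e ∈ f), Real.cot (faceAngle m u f e)
        = ∑ f ∈ F.filter (fun f => e ∈ f), Real.cot (faceAngle m v f e) :=
      mul_left_cancel₀ (by norm_num : (1/2 : ℝ) ≠ 0) h
    rw [h2, sub_self, zero_mul]
  have hsum0 : ∑ f ∈ F, ∑ e ∈ f,
      (Real.cot (faceAngle m u f e) - Real.cot (faceAngle m v f e)) * (u e - v e) = 0 := by
    rw [hswap]
    exact Finset.sum_eq_zero fun e _ => hinner e
  have hzero : ∀ f ∈ F, ∑ e ∈ f,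
      (Real.cot (faceAngle m u f e) - Real.cot (faceAngle m v f e)) * (u e - v e) = 0 :=
    (Finset.sum_eq_zero_iff_of_nonpos fun f hf => (key f hf).1).mp hsum0
  have hprop : ∀ f ∈ F, ∃ l, 0 < l ∧ ∀ e ∈ f, v e = l * u e :=
    fun f hf => (key f hf).2 (hzero f hf)
  choose lam hlampos hlam using hprop
  have hadj : ∀ x y : {f // f ∈ F}, (faceGraph m F).Adj x y → lam x.1 x.2 = lam y.1 y.2 := by
    rintro ⟨f, hf⟩ ⟨g, hg⟩ ⟨hne, hint⟩
    obtain ⟨e, he⟩ := hint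
    rw [Finset.mem_inter] at he
    have h1 := hlam f hf e he.1
    have h2 := hlam g hg e he.2
    exact mul_right_cancel₀ (hupos e).ne' (h1.symm.trans h2)
  have hconst : ∀ x y : {f // f ∈ F}, lam x.1 x.2 = lam y.1 y.2 := by
    intro x y
    obtain ⟨w⟩ := hconn.preconnected x y
    induction w with
    | nil => rfl
    | cons h p ih => exact (hadj _ _ h).trans ih
  obtain ⟨f0, hf0, -⟩ := hcover ⟨0, hm⟩
  have hL : ∀ e : Fin m, v e = lam f0 hf0 * u e := by
    intro e
    obtain ⟨f, hfF, hef⟩ := hcover e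
    rw [hlam f hfF e hef, hconst ⟨f, hfF⟩ ⟨f0, hf0⟩]
  have hmsum : (m:ℝ) = lam f0 hf0 * m := by
    calc (m:ℝ) = ∑ e, v e := hsumv.symm
      _ = ∑ e, lam f0 hf0 * u e := Finset.sum_congr rfl fun e _ => hL e
      _ = lam f0 hf0 * ∑ e, u e := by rw [Finset.mul_sum]
      _ = lam f0 hf0 * m := by rw [hsumu]
  have hL1 : lam f0 hf0 = 1 := by
    have hm0 : (m:ℝ) ≠ 0 := Nat.cast_ne_zero.mpr hm.ne'
    have h1 : (1 : ℝ) * m = lam f0 hf0 * m := by rw [one_mul]; exact hmsum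
    exact (mul_right_cancel₀ hm0 h1).symm
  funext e
  rw [hL e, hL1, one_mul]
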